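/- Let T ≥ 1 and d ≥ 1, let U_1, …, U_T be unitary d×d complex matrices, let a_0,…,a_T be real numbers and b_0,…,b_{T−1} complex numbers, and define H_prop := Σ_{t=0}^T a_t |t⟩⟨t|⊗I_d + Σ_{t=0}^{T−1} ( b_t |t+1⟩⟨t| ⊗ U_{t+1} + conj(b_t) |t⟩⟨t+1| ⊗ U_{t+1}^† ) on ℂ^{T+1}⊗ℂ^d and H_clock := Σ_{t=0}^T a_t |t⟩⟨t| + Σ_{t=0}^{T−1} ( b_t |t+1⟩⟨t| + conj(b_t) |t⟩⟨t+1| ) on ℂ^{T+1}. Then for any orthogonal projections Π_in, Π_out on ℂ^d: (i) the smallest eigenvalue of H_prop equals the smallest eigenvalue of H_clock, and (ii) the smallest eigenvalue of H_prop + |0⟩⟨0|⊗Π_in + |T⟩⟨T|⊗Π_out is at most the smallest eigenvalue of H_clock + |0⟩⟨0| + |T⟩⟨T|. -/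

import Mathlib

open Matrix Kronecker

set_option linter.unusedSectionVars false

/-- The modified Feynman propagation Hamiltonian on `ℂ^{T+1} ⊗ ℂ^d`. -/
noncomputable def Hprop (T d : ℕ) (U : ℕ → Matrix (Fin d) (Fin d) ℂ)
    (a : Fin (T + 1) → ℝ) (b : Fin T → ℂ) :
    Matrix (Fin (T + 1) × Fin d) (Fin (T + 1) × Fin d) ℂ :=
  (∑ t : Fin (T + 1), (a t : ℂ) •
      (Matrix.single t t (1 : ℂ) ⊗ₖ (1 : Matrix (Fin d) (Fin d) ℂ)))
  + ∑ t : Fin T,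
      (b t • (Matrix.single t.succ t.castSucc (1 : ℂ) ⊗ₖ U (t.val + 1))
        + (starRingEnd ℂ) (b t) •
            (Matrix.single t.castSucc t.succ (1 : ℂ) ⊗ₖ (U (t.val + 1))ᴴ))

/-- The clock Hamiltonian on `ℂ^{T+1}`. -/
noncomputable def Hclock (T : ℕ) (a : Fin (T + 1) → ℝ) (b : Fin T → ℂ) :
    Matrix (Fin (T + 1)) (Fin (T + 1)) ℂ :=
  (∑ t : Fin (T + 1), (a t : ℂ) • Matrix.single t t (1 : ℂ))
  + ∑ t : Fin T,
      (b t • Matrix.single t.succ t.castSucc (1 : ℂ)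
        + (starRingEnd ℂ) (b t) • Matrix.single t.castSucc t.succ (1 : ℂ))

section general
variable {n : Type*} [Fintype n] [DecidableEq n]

lemma sum_mulVec' {ι : Type*} (s : Finset ι) (f : ι → Matrix n n ℂ) (v : n → ℂ) :
    (∑ i ∈ s, f i) *ᵥ v = ∑ i ∈ s, f i *ᵥ v :=
  map_sum (Matrix.mulVec.addMonoidHomLeft v) f s

lemma dotProduct_sum' {ι : Type*} (s : Finset ι) (v : n → ℂ) (f : ι → n → ℂ) :
    v ⬝ᵥ (∑ i ∈ s, f i) = ∑ i ∈ s, v ⬝ᵥ f i := by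
  simp only [dotProduct, Finset.sum_apply, Finset.mul_sum]
  exact Finset.sum_comm

lemma dot_mulVec_mulVec (A B : Matrix n n ℂ) (u w : n → ℂ) :
    star (A *ᵥ u) ⬝ᵥ (B *ᵥ w) = star u ⬝ᵥ ((Aᴴ * B) *ᵥ w) := by
  rw [star_mulVec, dotProduct_mulVec, vecMul_vecMul, ← dotProduct_mulVec]

lemma quad_smulvec (A : Matrix n n ℂ) (c : ℂ) (v : n → ℂ) :
    star (c • v) ⬝ᵥ (A *ᵥ (c • v)) = (star c * c) * (star v ⬝ᵥ (A *ᵥ v)) := by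
  rw [mulVec_smul, star_smul, smul_dotProduct, dotProduct_smul, smul_eq_mul, smul_eq_mul]
  ring

lemma dot_smulvec (c : ℂ) (v : n → ℂ) :
    star (c • v) ⬝ᵥ (c • v) = (star c * c) * (star v ⬝ᵥ v) := by
  rw [star_smul, smul_dotProduct, dotProduct_smul, smul_eq_mul, smul_eq_mul]
  ring

lemma self_quad (u : n → ℂ) : (star u ⬝ᵥ u).re = ∑ i, Complex.normSq (u i) := by
  simp only [dotProduct, Complex.re_sum, Pi.star_apply]
  congr 1; ext i
  rw [show star (u i) = (starRingEnd ℂ) (u i) from rfl, mul_comm, Complex.mul_conj]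
  simp

lemma self_quad_nonneg (u : n → ℂ) : 0 ≤ (star u ⬝ᵥ u).re := by
  rw [self_quad]
  exact Finset.sum_nonneg fun i _ => Complex.normSq_nonneg _

lemma proj_quad_le {P : Matrix n n ℂ} (hP : P.IsHermitian) (hP2 : P * P = P) (y : n → ℂ) :
    (star y ⬝ᵥ (P *ᵥ y)).re ≤ (star y ⬝ᵥ y).re := by
  have key : star y ⬝ᵥ y - star y ⬝ᵥ (P *ᵥ y)
      = star ((1 - P) *ᵥ y) ⬝ᵥ ((1 - P) *ᵥ y) := by
    rw [dot_mulVec_mulVec]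
    have h1 : ((1 - P)ᴴ : Matrix n n ℂ) = 1 - P := by
      rw [conjTranspose_sub, conjTranspose_one, hP.eq]
    have h2 : ((1 - P) * (1 - P) : Matrix n n ℂ) = 1 - P := by
      rw [sub_mul, mul_sub, mul_sub, hP2, one_mul, mul_one, one_mul]
      simp
    rw [h1, h2, sub_mulVec, one_mulVec, dotProduct_sub]
  have h3 := self_quad_nonneg ((1 - P) *ᵥ y)
  rw [← key, Complex.sub_re] at h3
  linarith

lemma diag_quad (u : n → ℂ) (ev : n → ℝ) :
    (star u ⬝ᵥ ((diagonal (RCLike.ofReal ∘ ev) : Matrix n n ℂ) *ᵥ u)).re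
      = ∑ i, ev i * Complex.normSq (u i) := by
  simp only [dotProduct, mulVec_diagonal, Complex.re_sum, Pi.star_apply, Function.comp,
    show (RCLike.ofReal : ℝ → ℂ) = Complex.ofReal from rfl]
  congr 1; ext i
  have h : star (u i) * ((ev i : ℂ) * u i) = (ev i : ℂ) * (star (u i) * u i) := by ring
  rw [h, show star (u i) = (starRingEnd ℂ) (u i) from rfl, mul_comm ((starRingEnd ℂ) (u i)),
    Complex.mul_conj]
  simp

variable [Nonempty n]

lemma rayleigh_lb {A : Matrix n n ℂ} (hA : A.IsHermitian) (z : n → ℂ) :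
    (⨅ i, hA.eigenvalues i) * (star z ⬝ᵥ z).re ≤ (star z ⬝ᵥ (A *ᵥ z)).re := by
  classical
  set Um := (hA.eigenvectorUnitary : Matrix n n ℂ) with hUm
  have hUU : Um * star Um = 1 := (Matrix.mem_unitaryGroup_iff).mp hA.eigenvectorUnitary.2
  set u := (star Um) *ᵥ z with hu
  have hsu : star u = star z ᵥ* Um := by
    rw [hu, star_mulVec]; simp [Matrix.star_eq_conjTranspose]
  have h1 : star z ⬝ᵥ (A *ᵥ z)
      = star u ⬝ᵥ ((diagonal (RCLike.ofReal ∘ hA.eigenvalues) : Matrix n n ℂ) *ᵥ u) := by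
    conv_lhs => rw [hA.spectral_theorem, Unitary.conjStarAlgAut_apply]
    rw [← mulVec_mulVec, ← mulVec_mulVec, dotProduct_mulVec, hsu]
  have h2 : star z ⬝ᵥ z = star u ⬝ᵥ u := by
    rw [hsu, hu, ← dotProduct_mulVec, mulVec_mulVec, hUU, one_mulVec]
  rw [h1, h2, diag_quad, self_quad, Finset.mul_sum]
  apply Finset.sum_le_sum
  intro i _
  exact mul_le_mul_of_nonneg_right
    (ciInf_le (Set.Finite.bddBelow (Set.finite_range _)) i) (Complex.normSq_nonneg _)

lemma lammin_le_of_unit {A : Matrix n n ℂ} (hA : A.IsHermitian) {z : n → ℂ}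
    (hz : star z ⬝ᵥ z = 1) :
    (⨅ i, hA.eigenvalues i) ≤ (star z ⬝ᵥ (A *ᵥ z)).re := by
  have h := rayleigh_lb hA z
  rw [hz] at h
  simpa using h

lemma exists_min_vec {A : Matrix n n ℂ} (hA : A.IsHermitian) :
    ∃ z : n → ℂ, star z ⬝ᵥ z = 1 ∧ (star z ⬝ᵥ (A *ᵥ z)).re = ⨅ i, hA.eigenvalues i := by
  classical
  obtain ⟨i0, -, hi0⟩ := Finset.exists_min_image Finset.univ hA.eigenvalues
    ⟨Classical.arbitrary n, Finset.mem_univ _⟩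
  have hmin : (⨅ i, hA.eigenvalues i) = hA.eigenvalues i0 :=
    le_antisymm (ciInf_le (Set.Finite.bddBelow (Set.finite_range _)) i0)
      (le_ciInf fun j => hi0 j (Finset.mem_univ j))
  refine ⟨⇑(hA.eigenvectorBasis i0), ?_, ?_⟩
  · have h := EuclideanSpace.inner_eq_star_dotProduct (𝕜 := ℂ)
      (hA.eigenvectorBasis i0) (hA.eigenvectorBasis i0)
    rw [dotProduct_comm, ← h]
    have h1 : ‖hA.eigenvectorBasis i0‖ = 1 := hA.eigenvectorBasis.orthonormal.1 i0
    rw [@inner_self_eq_norm_sq_to_K ℂ, h1]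
    norm_num
  · rw [hmin, hA.eigenvalues_eq i0]; rfl

end general

section spec
variable {m d : ℕ}

lemma std_quad (s t : Fin m) (v : Fin m → ℂ) :
    star v ⬝ᵥ ((Matrix.single s t (1:ℂ)) *ᵥ v) = star (v s) * v t := by
  simp [dotProduct, mulVec, Matrix.single, ite_and, Finset.mul_sum]

lemma kron_quad (s t : Fin m) (B : Matrix (Fin d) (Fin d) ℂ) (x : Fin m × Fin d → ℂ) :
    star x ⬝ᵥ ((Matrix.single s t (1:ℂ) ⊗ₖ B) *ᵥ x)
      = star (fun i => x (s,i)) ⬝ᵥ (B *ᵥ fun j => x (t,j)) := by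
  simp [dotProduct, mulVec, Matrix.single, ite_and, Finset.mul_sum,
    Fintype.sum_prod_type]
end spec

section MM
variable {d : ℕ} (U : ℕ → Matrix (Fin d) (Fin d) ℂ)

noncomputable def Mm : ℕ → Matrix (Fin d) (Fin d) ℂ
  | 0 => 1
  | n+1 => U (n+1) * Mm n

lemma Mm_unitary {T : ℕ} (hU : ∀ i, 1 ≤ i → i ≤ T → U i ∈ Matrix.unitaryGroup (Fin d) ℂ) :
    ∀ t, t ≤ T → Mm U t ∈ Matrix.unitaryGroup (Fin d) ℂ := by
  intro t
  induction t with
  | zero => intro _; exact one_mem _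
  | succ n ih =>
      intro h
      rw [show Mm U (n+1) = U (n+1) * Mm U n from rfl]
      exact mul_mem (hU (n+1) (by omega) h) (ih (by omega))

lemma Mm_mul_star {T t : ℕ} (hU : ∀ i, 1 ≤ i → i ≤ T → U i ∈ Matrix.unitaryGroup (Fin d) ℂ)
    (ht : t ≤ T) : Mm U t * (Mm U t)ᴴ = 1 := by
  have h := (Matrix.mem_unitaryGroup_iff).mp (Mm_unitary U hU t ht)
  rwa [Matrix.star_eq_conjTranspose] at h

lemma Mm_star_mul {T t : ℕ} (hU : ∀ i, 1 ≤ i → i ≤ T → U i ∈ Matrix.unitaryGroup (Fin d) ℂ)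
    (ht : t ≤ T) : (Mm U t)ᴴ * Mm U t = 1 := by
  have h := (Matrix.mem_unitaryGroup_iff').mp (Mm_unitary U hU t ht)
  rwa [Matrix.star_eq_conjTranspose] at h
end MM
section main
variable {T d : ℕ} (U : ℕ → Matrix (Fin d) (Fin d) ℂ)
  (a : Fin (T + 1) → ℝ) (b : Fin T → ℂ)

/-- row `t` of a composite vector -/
def xrow (x : Fin (T+1) × Fin d → ℂ) (t : Fin (T+1)) : Fin d → ℂ := fun i => x (t, i)

/-- the rotated rows -/
noncomputable def yrow (x : Fin (T+1) × Fin d → ℂ) (t : Fin (T+1)) : Fin d → ℂ :=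
  (Mm U t.val)ᴴ *ᵥ xrow x t

/-- column `j` of the rotated vector -/
noncomputable def wcol (x : Fin (T+1) × Fin d → ℂ) (j : Fin d) : Fin (T+1) → ℂ :=
  fun t => yrow U x t j

lemma expand_prop (x : Fin (T+1) × Fin d → ℂ) :
    star x ⬝ᵥ (Hprop T d U a b *ᵥ x)
      = ∑ t : Fin (T+1), (a t : ℂ) * (star (xrow x t) ⬝ᵥ xrow x t)
      + ∑ t : Fin T,
          (b t * (star (xrow x t.succ) ⬝ᵥ (U (t.val + 1) *ᵥ xrow x t.castSucc))
            + (starRingEnd ℂ) (b t) *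
                (star (xrow x t.castSucc) ⬝ᵥ ((U (t.val + 1))ᴴ *ᵥ xrow x t.succ))) := by
  rw [Hprop, add_mulVec, dotProduct_add, sum_mulVec', sum_mulVec',
    dotProduct_sum', dotProduct_sum']
  congr 1
  · refine Finset.sum_congr rfl fun t _ => ?_
    rw [smul_mulVec, dotProduct_smul, kron_quad, smul_eq_mul, one_mulVec]
    rfl
  · refine Finset.sum_congr rfl fun t _ => ?_
    rw [add_mulVec, dotProduct_add, smul_mulVec, dotProduct_smul,
      smul_mulVec, dotProduct_smul, kron_quad, kron_quad, smul_eq_mul, smul_eq_mul]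
    rfl

lemma expand_clock (v : Fin (T+1) → ℂ) :
    star v ⬝ᵥ (Hclock T a b *ᵥ v)
      = ∑ t : Fin (T+1), (a t : ℂ) * (star (v t) * v t)
      + ∑ t : Fin T,
          (b t * (star (v t.succ) * v t.castSucc)
            + (starRingEnd ℂ) (b t) * (star (v t.castSucc) * v t.succ)) := by
  rw [Hclock, add_mulVec, dotProduct_add, sum_mulVec', sum_mulVec',
    dotProduct_sum', dotProduct_sum']
  congr 1
  · refine Finset.sum_congr rfl fun t _ => ?_
    rw [smul_mulVec, dotProduct_smul, std_quad, smul_eq_mul]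
  · refine Finset.sum_congr rfl fun t _ => ?_
    rw [add_mulVec, dotProduct_add, smul_mulVec, dotProduct_smul,
      smul_mulVec, dotProduct_smul, std_quad, std_quad, smul_eq_mul, smul_eq_mul]
end main
section main2
variable {T d : ℕ} (U : ℕ → Matrix (Fin d) (Fin d) ℂ)
  (a : Fin (T + 1) → ℝ) (b : Fin T → ℂ)

lemma dot_as_sum {m : ℕ} (u w : Fin m → ℂ) : star u ⬝ᵥ w = ∑ j, star (u j) * w j := rfl

lemma yd_diag (hU : ∀ i, 1 ≤ i → i ≤ T → U i ∈ Matrix.unitaryGroup (Fin d) ℂ)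
    (x : Fin (T+1) × Fin d → ℂ) (t : Fin (T+1)) :
    star (yrow U x t) ⬝ᵥ yrow U x t = star (xrow x t) ⬝ᵥ xrow x t := by
  rw [yrow, dot_mulVec_mulVec, conjTranspose_conjTranspose,
    Mm_mul_star U hU t.is_le, one_mulVec]

lemma yd_sub (hU : ∀ i, 1 ≤ i → i ≤ T → U i ∈ Matrix.unitaryGroup (Fin d) ℂ)
    (x : Fin (T+1) × Fin d → ℂ) (t : Fin T) :
    star (yrow U x t.succ) ⬝ᵥ yrow U x t.castSucc
      = star (xrow x t.succ) ⬝ᵥ (U (t.val + 1) *ᵥ xrow x t.castSucc) := by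
  rw [yrow, yrow, dot_mulVec_mulVec, conjTranspose_conjTranspose]
  congr 2
  rw [Fin.val_succ, Fin.coe_castSucc,
    show Mm U (t.val + 1) = U (t.val + 1) * Mm U t.val from rfl, mul_assoc,
    Mm_mul_star U hU (le_of_lt t.isLt), mul_one]

lemma yd_sup (hU : ∀ i, 1 ≤ i → i ≤ T → U i ∈ Matrix.unitaryGroup (Fin d) ℂ)
    (x : Fin (T+1) × Fin d → ℂ) (t : Fin T) :
    star (yrow U x t.castSucc) ⬝ᵥ yrow U x t.succ
      = star (xrow x t.castSucc) ⬝ᵥ ((U (t.val + 1))ᴴ *ᵥ xrow x t.succ) := by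
  rw [yrow, yrow, dot_mulVec_mulVec, conjTranspose_conjTranspose]
  congr 2
  rw [Fin.val_succ, Fin.coe_castSucc,
    show Mm U (t.val + 1) = U (t.val + 1) * Mm U t.val from rfl, conjTranspose_mul,
    ← mul_assoc, Mm_mul_star U hU (le_of_lt t.isLt), one_mul]

lemma quad_main (hU : ∀ i, 1 ≤ i → i ≤ T → U i ∈ Matrix.unitaryGroup (Fin d) ℂ)
    (x : Fin (T+1) × Fin d → ℂ) :
    star x ⬝ᵥ (Hprop T d U a b *ᵥ x)
      = ∑ j : Fin d, star (wcol U x j) ⬝ᵥ (Hclock T a b *ᵥ wcol U x j) := by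
  rw [expand_prop U a b x]
  simp only [expand_clock a b]
  conv_rhs => rw [Finset.sum_add_distrib]
  congr 1
  · conv_rhs => rw [Finset.sum_comm]
    refine Finset.sum_congr rfl fun t _ => ?_
    conv_rhs => rw [← Finset.mul_sum]
    congr 1
    rw [← yd_diag U hU x t, dot_as_sum]
    rfl
  · conv_rhs => rw [Finset.sum_comm]
    refine Finset.sum_congr rfl fun t _ => ?_
    conv_rhs => rw [Finset.sum_add_distrib, ← Finset.mul_sum, ← Finset.mul_sum]
    congr 1
    · congr 1
      rw [← yd_sub U hU x t, dot_as_sum]; rfl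
    · congr 1
      rw [← yd_sup U hU x t, dot_as_sum]; rfl

lemma norm_main (hU : ∀ i, 1 ≤ i → i ≤ T → U i ∈ Matrix.unitaryGroup (Fin d) ℂ)
    (x : Fin (T+1) × Fin d → ℂ) :
    star x ⬝ᵥ x = ∑ j : Fin d, star (wcol U x j) ⬝ᵥ wcol U x j := by
  have h1 : star x ⬝ᵥ x = ∑ t : Fin (T+1), star (xrow x t) ⬝ᵥ xrow x t := by
    simp [dotProduct, Fintype.sum_prod_type, xrow]
  rw [h1, Finset.sum_congr rfl fun t _ => ((yd_diag U hU x t).symm).trans (dot_as_sum _ _),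
    Finset.sum_comm]
  rfl

lemma wcol_special (hU : ∀ i, 1 ≤ i → i ≤ T → U i ∈ Matrix.unitaryGroup (Fin d) ℂ)
    (v : Fin (T+1) → ℂ) (e : Fin d → ℂ) (j : Fin d) :
    wcol U (fun p => v p.1 * (Mm U p.1.val *ᵥ e) p.2) j = e j • v := by
  funext t
  show ((Mm U t.val)ᴴ *ᵥ (fun i => v t * (Mm U t.val *ᵥ e) i)) j = e j • v t
  have h : (fun i => v t * (Mm U t.val *ᵥ e) i) = v t • (Mm U t.val *ᵥ e) := rfl
  rw [h, mulVec_smul, mulVec_mulVec, Mm_star_mul U hU t.is_le, one_mulVec]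
  simp [mul_comm]
end main2
section final
variable {T d : ℕ}

lemma star_mul_self_eq (c : ℂ) : star c * c = (Complex.normSq c : ℂ) := by
  rw [show star c = (starRingEnd ℂ) c from rfl, mul_comm, Complex.mul_conj]

theorem stmt4 (T d : ℕ) (hT : 1 ≤ T) (hd : 1 ≤ d)
    (U : ℕ → Matrix (Fin d) (Fin d) ℂ)
    (hU : ∀ i, 1 ≤ i → i ≤ T → U i ∈ Matrix.unitaryGroup (Fin d) ℂ)
    (a : Fin (T + 1) → ℝ) (b : Fin T → ℂ)
    (Pin Pout : Matrix (Fin d) (Fin d) ℂ)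
    (hPin : Pin.IsHermitian) (hPin2 : Pin * Pin = Pin)
    (hPout : Pout.IsHermitian) (hPout2 : Pout * Pout = Pout)
    (h1 : (Hprop T d U a b).IsHermitian)
    (h2 : (Hclock T a b).IsHermitian)
    (h3 : (Hprop T d U a b
        + Matrix.single (0 : Fin (T + 1)) (0 : Fin (T + 1)) (1 : ℂ) ⊗ₖ Pin
        + Matrix.single (Fin.last T) (Fin.last T) (1 : ℂ) ⊗ₖ Pout).IsHermitian)
    (h4 : (Hclock T a b
        + Matrix.single (0 : Fin (T + 1)) (0 : Fin (T + 1)) (1 : ℂ)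
        + Matrix.single (Fin.last T) (Fin.last T) (1 : ℂ)).IsHermitian) :
    (⨅ i, h1.eigenvalues i) = (⨅ i, h2.eigenvalues i) ∧
    (⨅ i, h3.eigenvalues i) ≤ (⨅ i, h4.eigenvalues i) := by
  haveI : NeZero d := ⟨by omega⟩
  set e : Fin d → ℂ := fun j => if j = 0 then 1 else 0 with he_def
  have he : star e ⬝ᵥ e = 1 := by
    simp [he_def, dotProduct, apply_ite, Finset.sum_ite_eq']
  set xf : (Fin (T+1) → ℂ) → (Fin (T+1) × Fin d → ℂ) :=
    fun v p => v p.1 * (Mm U p.1.val *ᵥ e) p.2 with hxf_def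
  have hwcol : ∀ v j, wcol U (xf v) j = e j • v := fun v j => wcol_special U hU v e j
  -- norm of xf v
  have hxnorm : ∀ v : Fin (T+1) → ℂ, star v ⬝ᵥ v = 1 → star (xf v) ⬝ᵥ (xf v) = 1 := by
    intro v hv
    rw [norm_main U hU (xf v)]
    simp only [hwcol]
    rw [Finset.sum_congr rfl fun j _ => dot_smulvec (e j) v]
    simp only [hv, mul_one]
    rw [← dot_as_sum, he]
  -- quad form of xf v
  have hxquad : ∀ v : Fin (T+1) → ℂ,
      star (xf v) ⬝ᵥ (Hprop T d U a b *ᵥ (xf v)) = star v ⬝ᵥ (Hclock T a b *ᵥ v) := by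
    intro v
    rw [quad_main U a b hU (xf v)]
    simp only [hwcol]
    rw [Finset.sum_congr rfl fun j _ => quad_smulvec (Hclock T a b) (e j) v,
      ← Finset.sum_mul, ← dot_as_sum, he, one_mul]
  constructor
  · -- part (i)
    apply le_antisymm
    · obtain ⟨v, hv1, hv2⟩ := exists_min_vec h2
      have h := lammin_le_of_unit h1 (hxnorm v hv1)
      rwa [hxquad v, hv2] at h
    · obtain ⟨z, hz1, hz2⟩ := exists_min_vec h1
      rw [← hz2]
      have hre : (star z ⬝ᵥ (Hprop T d U a b *ᵥ z)).re
          = ∑ j : Fin d, (star (wcol U z j) ⬝ᵥ (Hclock T a b *ᵥ wcol U z j)).re := by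
        rw [quad_main U a b hU z, Complex.re_sum]
      have hnre : ∑ j : Fin d, (star (wcol U z j) ⬝ᵥ wcol U z j).re = 1 := by
        rw [← Complex.re_sum, ← norm_main U hU z, hz1, Complex.one_re]
      calc (⨅ i, h2.eigenvalues i)
          = (⨅ i, h2.eigenvalues i) * ∑ j : Fin d, (star (wcol U z j) ⬝ᵥ wcol U z j).re := by
            rw [hnre, mul_one]
        _ = ∑ j : Fin d, (⨅ i, h2.eigenvalues i) * (star (wcol U z j) ⬝ᵥ wcol U z j).re := by
            rw [Finset.mul_sum]
        _ ≤ ∑ j : Fin d, (star (wcol U z j) ⬝ᵥ (Hclock T a b *ᵥ wcol U z j)).re :=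
            Finset.sum_le_sum fun j _ => rayleigh_lb h2 (wcol U z j)
        _ = (star z ⬝ᵥ (Hprop T d U a b *ᵥ z)).re := hre.symm
  · -- part (ii)
    obtain ⟨v, hv1, hv2⟩ := exists_min_vec h4
    set x := xf v with hx_def
    have hxu := hxnorm v hv1
    have hkey := lammin_le_of_unit h3 hxu
    -- expand quad form of the big matrix
    have hrow0 : xrow x (0 : Fin (T+1)) = v 0 • e := by
      funext i
      show v 0 * (Mm U (0:Fin (T+1)).val *ᵥ e) i = v 0 • e i
      rw [show ((0:Fin (T+1)).val) = 0 from rfl, show Mm U 0 = 1 from rfl, one_mulVec]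
      rfl
    have hrowT : xrow x (Fin.last T) = v (Fin.last T) • (Mm U T *ᵥ e) := by
      funext i
      show v (Fin.last T) * (Mm U (Fin.last T).val *ᵥ e) i = _
      rw [Fin.val_last]
      rfl
    have hwT : star (Mm U T *ᵥ e) ⬝ᵥ (Mm U T *ᵥ e) = 1 := by
      rw [dot_mulVec_mulVec, Mm_star_mul U hU (le_refl T), one_mulVec, he]
    have hsplit : (star x ⬝ᵥ ((Hprop T d U a b
        + Matrix.single (0 : Fin (T + 1)) (0 : Fin (T + 1)) (1 : ℂ) ⊗ₖ Pin
        + Matrix.single (Fin.last T) (Fin.last T) (1 : ℂ) ⊗ₖ Pout) *ᵥ x)).re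
        = (star v ⬝ᵥ (Hclock T a b *ᵥ v)).re
          + Complex.normSq (v 0) * (star e ⬝ᵥ (Pin *ᵥ e)).re
          + Complex.normSq (v (Fin.last T))
              * (star (Mm U T *ᵥ e) ⬝ᵥ (Pout *ᵥ (Mm U T *ᵥ e))).re := by
      rw [add_mulVec, add_mulVec, dotProduct_add, dotProduct_add, Complex.add_re,
        Complex.add_re, hxquad v, kron_quad, kron_quad]
      congr 2
      · show (star (xrow x (0:Fin (T+1))) ⬝ᵥ (Pin *ᵥ xrow x (0:Fin (T+1)))).re = _
        rw [hrow0, quad_smulvec, star_mul_self_eq, Complex.re_ofReal_mul]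
      · show (star (xrow x (Fin.last T)) ⬝ᵥ (Pout *ᵥ xrow x (Fin.last T))).re = _
        rw [hrowT, quad_smulvec, star_mul_self_eq, Complex.re_ofReal_mul]
    rw [hsplit] at hkey
    have hPin_le : (star e ⬝ᵥ (Pin *ᵥ e)).re ≤ 1 := by
      have := proj_quad_le hPin hPin2 e
      rwa [he, Complex.one_re] at this
    have hPout_le : (star (Mm U T *ᵥ e) ⬝ᵥ (Pout *ᵥ (Mm U T *ᵥ e))).re ≤ 1 := by
      have := proj_quad_le hPout hPout2 (Mm U T *ᵥ e)
      rwa [hwT, Complex.one_re] at this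
    have hfin : (star v ⬝ᵥ ((Hclock T a b
        + Matrix.single (0 : Fin (T + 1)) (0 : Fin (T + 1)) (1 : ℂ)
        + Matrix.single (Fin.last T) (Fin.last T) (1 : ℂ)) *ᵥ v)).re
        = (star v ⬝ᵥ (Hclock T a b *ᵥ v)).re
          + Complex.normSq (v 0) + Complex.normSq (v (Fin.last T)) := by
      rw [add_mulVec, add_mulVec, dotProduct_add, dotProduct_add, Complex.add_re,
        Complex.add_re, std_quad, std_quad, star_mul_self_eq, star_mul_self_eq,
        Complex.ofReal_re, Complex.ofReal_re]
    rw [← hv2, hfin]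
    have n0 := Complex.normSq_nonneg (v 0)
    have nT := Complex.normSq_nonneg (v (Fin.last T))
    nlinarith [mul_le_mul_of_nonneg_left hPin_le n0,
      mul_le_mul_of_nonneg_left hPout_le nT]
end final
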